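/- There exist perfect matchings M₁ ⊆ 𝒜₁ and M₂ ⊆ 𝒜₂ with M₁ ∩ M₂ = ∅ if and only if the constructed 2-matching instance admits a valid assignment f with w(f) ≤ t. -/
import Mathlib


/-- The ground set `B` of the constructed 2-matching instance: elements `p^i_r`
(left summand), `q^i_s` (middle summand), and `z_{rs}, z'_{rs}` (right summand,
indexed by a pair and a tag in `Fin 2`). -/
abbrev DMB (n : ℕ) := (Fin 2 × Fin n) ⊕ ((Fin 2 × Fin n) ⊕ ((Fin n × Fin n) × Fin 2))

/-- The candidate set `{p^i_r, q^i_s}` for the pair `a = (r, s)`. -/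
def pqSet {n : ℕ} (i : Fin 2) (a : Fin n × Fin n) : Finset (DMB n) :=
  {Sum.inl (i, a.1), Sum.inr (Sum.inl (i, a.2))}

/-- The candidate set `{z_{rs}, z'_{rs}}` for the pair `a = (r, s)`. -/
def zSet {n : ℕ} (a : Fin n × Fin n) : Finset (DMB n) :=
  {Sum.inr (Sum.inr (a, 0)), Sum.inr (Sum.inr (a, 1))}

/-- The candidate sets `P_{(r,s)}` of the constructed 2-matching instance. -/
def Pdm {n : ℕ} (A1 A2 : Finset (Fin n × Fin n)) (a : Fin n × Fin n) :
    Finset (Finset (DMB n)) :=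
  (if a ∈ A1 then {pqSet 0 a} else ∅) ∪ (if a ∈ A2 then {pqSet 1 a} else ∅) ∪ {zSet a}

/-- The weights of the constructed 2-matching instance: `0` on `{p^i_r, q^i_s}` and `1`
on `{z_{rs}, z'_{rs}}` when `(p_r,q_s) ∈ 𝒜₁ △ 𝒜₂`; `1` and `2` respectively when
`(p_r,q_s) ∈ 𝒜₁ ∩ 𝒜₂`. -/
def wdm {n : ℕ} (A1 A2 : Finset (Fin n × Fin n)) (a : Fin n × Fin n)
    (j : Finset (DMB n)) : ℝ :=
  (if j = zSet a then 1 else 0) + (if a ∈ A1 ∧ a ∈ A2 then 1 else 0)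

/-- A perfect matching: `n` pairs such that every `p_r` and every `q_s` occurs in
exactly one pair. -/
def IsPM {n : ℕ} (M : Finset (Fin n × Fin n)) : Prop :=
  M.card = n ∧ (∀ r : Fin n, ∃! s : Fin n, (r, s) ∈ M) ∧
    (∀ s : Fin n, ∃! r : Fin n, (r, s) ∈ M)


lemma pq_ne_z {n : ℕ} (i : Fin 2) (a b : Fin n × Fin n) : pqSet i a ≠ zSet b := by
  intro h
  have h1 : (Sum.inl (i, a.1) : DMB n) ∈ pqSet i a := by simp [pqSet]
  rw [h] at h1
  simp [zSet] at h1

lemma pq0_ne_pq1 {n : ℕ} (a b : Fin n × Fin n) : pqSet (0:Fin 2) a ≠ pqSet 1 b := by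
  intro h
  have h1 : (Sum.inl ((0:Fin 2), a.1) : DMB n) ∈ pqSet 0 a := by simp [pqSet]
  rw [h] at h1
  simp [pqSet] at h1

lemma pq_z_disj {n : ℕ} (i : Fin 2) (a b : Fin n × Fin n) : pqSet i a ∩ zSet b = ∅ := by
  ext x
  simp [pqSet, zSet]

lemma z_z_disj {n : ℕ} {a b : Fin n × Fin n} (h : a ≠ b) : zSet a ∩ zSet b = ∅ := by
  ext x
  simp only [zSet, Finset.mem_inter, Finset.mem_insert, Finset.mem_singleton,
    Finset.notMem_empty, iff_false]
  rintro ⟨rfl | rfl, h2 | h2⟩ <;> simp_all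

lemma pq01_disj {n : ℕ} (a b : Fin n × Fin n) : pqSet (0:Fin 2) a ∩ pqSet 1 b = ∅ := by
  ext x
  simp only [pqSet, Finset.mem_inter, Finset.mem_insert, Finset.mem_singleton,
    Finset.notMem_empty, iff_false]
  rintro ⟨rfl | rfl, h2 | h2⟩ <;> simp_all

lemma pq_pq_disj {n : ℕ} (i : Fin 2) {a b : Fin n × Fin n} (h1 : a.1 ≠ b.1) (h2 : a.2 ≠ b.2) :
    pqSet i a ∩ pqSet i b = ∅ := by
  ext x
  simp only [pqSet, Finset.mem_inter, Finset.mem_insert, Finset.mem_singleton,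
    Finset.notMem_empty, iff_false]
  rintro ⟨rfl | rfl, h3 | h3⟩ <;> simp_all

lemma mem_Pdm {n : ℕ} {A1 A2 : Finset (Fin n × Fin n)} {a : Fin n × Fin n} {j : Finset (DMB n)} :
    j ∈ Pdm A1 A2 a ↔ (a ∈ A1 ∧ j = pqSet 0 a) ∨ (a ∈ A2 ∧ j = pqSet 1 a) ∨ j = zSet a := by
  simp only [Pdm, Finset.mem_union]
  split_ifs <;> simp_all <;> tauto

lemma pm_inj1 {n : ℕ} {M : Finset (Fin n × Fin n)} (hM : IsPM M) :
    ∀ a ∈ M, ∀ b ∈ M, a.1 = b.1 → a = b := by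
  rintro ⟨r, s⟩ ha ⟨r', s'⟩ hb h
  dsimp at h
  subst h
  obtain ⟨t, -, ht⟩ := hM.2.1 r
  have := ht s ha
  have := ht s' hb
  simp_all

lemma pm_inj2 {n : ℕ} {M : Finset (Fin n × Fin n)} (hM : IsPM M) :
    ∀ a ∈ M, ∀ b ∈ M, a.2 = b.2 → a = b := by
  rintro ⟨r, s⟩ ha ⟨r', s'⟩ hb h
  dsimp at h
  subst h
  obtain ⟨t, -, ht⟩ := hM.2.2 s
  have := ht r ha
  have := ht r' hb
  simp_all

lemma isPM_of {n : ℕ} {M : Finset (Fin n × Fin n)} (hcard : M.card = n)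
    (h1 : ∀ a ∈ M, ∀ b ∈ M, a.1 = b.1 → a = b)
    (h2 : ∀ a ∈ M, ∀ b ∈ M, a.2 = b.2 → a = b) : IsPM M := by
  refine ⟨hcard, ?_, ?_⟩
  · intro r
    have himg : M.image Prod.fst = Finset.univ := by
      apply Finset.eq_univ_of_card
      rw [Finset.card_image_of_injOn fun a ha b hb h => h1 a ha b hb h, hcard]
      simp
    have hr : r ∈ M.image Prod.fst := himg ▸ Finset.mem_univ r
    obtain ⟨⟨r', s⟩, hm, hh⟩ := Finset.mem_image.1 hr
    dsimp at hh; subst hh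
    exact ⟨s, hm, fun s' hs' => congrArg Prod.snd (h1 _ hs' _ hm rfl)⟩
  · intro s
    have himg : M.image Prod.snd = Finset.univ := by
      apply Finset.eq_univ_of_card
      rw [Finset.card_image_of_injOn fun a ha b hb h => h2 a ha b hb h, hcard]
      simp
    have hs : s ∈ M.image Prod.snd := himg ▸ Finset.mem_univ s
    obtain ⟨⟨r, s'⟩, hm, hh⟩ := Finset.mem_image.1 hs
    dsimp at hh; subst hh
    exact ⟨r, hm, fun r' hr' => congrArg Prod.fst (h2 _ hr' _ hm rfl)⟩

lemma wdm_sum {n : ℕ} (A1 A2 : Finset (Fin n × Fin n)) (f : Fin n × Fin n → Finset (DMB n)) :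
    ∑ a ∈ A1 ∪ A2, wdm A1 A2 a (f a)
      = (((A1 ∪ A2).filter fun a => f a = zSet a).card : ℝ) + ((A1 ∩ A2).card : ℝ) := by
  unfold wdm
  rw [Finset.sum_add_distrib, Finset.sum_boole, Finset.sum_boole]
  have : (A1 ∪ A2).filter (fun a => a ∈ A1 ∧ a ∈ A2) = A1 ∩ A2 := by
    ext a
    simp [Finset.mem_filter, Finset.mem_inter, Finset.mem_union]
    tauto
  rw [this]

lemma pq10_disj {n : ℕ} (a b : Fin n × Fin n) : pqSet (1:Fin 2) a ∩ pqSet 0 b = ∅ := by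
  rw [Finset.inter_comm]; exact pq01_disj b a

lemma z_pq_disj {n : ℕ} (i : Fin 2) (a b : Fin n × Fin n) : zSet a ∩ pqSet i b = ∅ := by
  rw [Finset.inter_comm]; exact pq_z_disj i b a

lemma coord_inj {n : ℕ} {U : Finset (Fin n × Fin n)} {f : Fin n × Fin n → Finset (DMB n)}
    (i : Fin 2)
    (hdis : ∀ a₁ ∈ U, ∀ a₂ ∈ U, a₁ ≠ a₂ → f a₁ ∩ f a₂ = ∅) :
    ∀ a ∈ U.filter (fun a => f a = pqSet i a), ∀ b ∈ U.filter (fun a => f a = pqSet i a),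
      (a.1 = b.1 ∨ a.2 = b.2) → a = b := by
  intro a ha b hb h
  by_contra hne
  obtain ⟨haU, hfa⟩ := Finset.mem_filter.1 ha
  obtain ⟨hbU, hfb⟩ := Finset.mem_filter.1 hb
  have hd := hdis a haU b hbU hne
  rw [hfa, hfb] at hd
  rcases h with h | h
  · have hx : (Sum.inl (i, a.1) : DMB n) ∈ pqSet i a ∩ pqSet i b := by
      simp [pqSet, Finset.mem_inter, h]
    simp [hd] at hx
  · have hx : (Sum.inr (Sum.inl (i, a.2)) : DMB n) ∈ pqSet i a ∩ pqSet i b := by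
      simp [pqSet, Finset.mem_inter, h]
    simp [hd] at hx

/-- there exist disjoint perfect matchings `M₁ ⊆ 𝒜₁`, `M₂ ⊆ 𝒜₂` iff the
constructed 2-matching instance admits a valid assignment of weight at most
`t = |𝒜₁| + |𝒜₂| − 2n`. -/
theorem stmt_9 {n : ℕ} (hn : 0 < n)
    (A1 A2 : Finset (Fin n × Fin n)) :
    (∃ M1 M2 : Finset (Fin n × Fin n),
        M1 ⊆ A1 ∧ M2 ⊆ A2 ∧ IsPM M1 ∧ IsPM M2 ∧ M1 ∩ M2 = ∅) ↔
    (∃ f : Fin n × Fin n → Finset (DMB n),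
        (∀ a ∈ A1 ∪ A2, f a ∈ Pdm A1 A2 a) ∧
        (∀ a₁ ∈ A1 ∪ A2, ∀ a₂ ∈ A1 ∪ A2, a₁ ≠ a₂ → f a₁ ∩ f a₂ = ∅) ∧
        ∑ a ∈ A1 ∪ A2, wdm A1 A2 a (f a) ≤ (A1.card : ℝ) + (A2.card : ℝ) - 2 * n) := by
  constructor
  · rintro ⟨M1, M2, hM1A, hM2A, hPM1, hPM2, hdisj⟩
    set g : Fin n × Fin n → Finset (DMB n) :=
      fun a => if a ∈ M1 then pqSet 0 a else if a ∈ M2 then pqSet 1 a else zSet a with hg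
    have hgval : ∀ a, (a ∈ M1 ∧ g a = pqSet 0 a) ∨ (a ∉ M1 ∧ a ∈ M2 ∧ g a = pqSet 1 a) ∨
        (a ∉ M1 ∧ a ∉ M2 ∧ g a = zSet a) := by
      intro a
      by_cases h1 : a ∈ M1
      · exact Or.inl ⟨h1, by rw [hg]; simp [h1]⟩
      by_cases h2 : a ∈ M2
      · exact Or.inr (Or.inl ⟨h1, h2, by rw [hg]; simp [h1, h2]⟩)
      · exact Or.inr (Or.inr ⟨h1, h2, by rw [hg]; simp [h1, h2]⟩)
    refine ⟨g, ?_, ?_, ?_⟩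
    · intro a _
      rcases hgval a with ⟨h1, he⟩ | ⟨_, h2, he⟩ | ⟨_, _, he⟩
      · exact mem_Pdm.2 (Or.inl ⟨hM1A h1, he⟩)
      · exact mem_Pdm.2 (Or.inr (Or.inl ⟨hM2A h2, he⟩))
      · exact mem_Pdm.2 (Or.inr (Or.inr he))
    · intro a₁ _ a₂ _ hne
      rcases hgval a₁ with ⟨m1, e1⟩ | ⟨_, m1, e1⟩ | ⟨_, _, e1⟩ <;>
        rcases hgval a₂ with ⟨m2, e2⟩ | ⟨_, m2, e2⟩ | ⟨_, _, e2⟩ <;> rw [e1, e2]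
      · exact pq_pq_disj 0 (fun h => hne (pm_inj1 hPM1 _ m1 _ m2 h))
          (fun h => hne (pm_inj2 hPM1 _ m1 _ m2 h))
      · exact pq01_disj a₁ a₂
      · exact pq_z_disj 0 a₁ a₂
      · exact pq10_disj a₁ a₂
      · exact pq_pq_disj 1 (fun h => hne (pm_inj1 hPM2 _ m1 _ m2 h))
          (fun h => hne (pm_inj2 hPM2 _ m1 _ m2 h))
      · exact pq_z_disj 1 a₁ a₂
      · exact z_pq_disj 0 a₁ a₂
      · exact z_pq_disj 1 a₁ a₂
      · exact z_z_disj hne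
    · rw [wdm_sum]
      have hfil : ((A1 ∪ A2).filter fun a => g a = zSet a) = (A1 ∪ A2) \ (M1 ∪ M2) := by
        ext a
        simp only [Finset.mem_filter, Finset.mem_sdiff, Finset.mem_union]
        constructor
        · rintro ⟨ha, hz⟩
          refine ⟨ha, ?_⟩
          rintro (h1 | h2)
          · rcases hgval a with ⟨_, he⟩ | ⟨hn1, _, _⟩ | ⟨hn1, _, _⟩
            · exact pq_ne_z 0 a a (he ▸ hz)
            · exact hn1 h1
            · exact hn1 h1
          · rcases hgval a with ⟨h1, he⟩ | ⟨_, _, he⟩ | ⟨_, hn2, _⟩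
            · exact pq_ne_z 0 a a (he ▸ hz)
            · exact pq_ne_z 1 a a (he ▸ hz)
            · exact hn2 h2
        · rintro ⟨ha, hm⟩
          push_neg at hm
          refine ⟨ha, ?_⟩
          rcases hgval a with ⟨h1, _⟩ | ⟨_, h2, _⟩ | ⟨_, _, he⟩
          · exact absurd h1 hm.1
          · exact absurd h2 hm.2
          · exact he
      rw [hfil]
      have hsub : M1 ∪ M2 ⊆ A1 ∪ A2 := Finset.union_subset_union hM1A hM2A
      have hcardU : (M1 ∪ M2).card = 2 * n := by
        rw [Finset.card_union_of_disjoint (Finset.disjoint_iff_inter_eq_empty.2 hdisj),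
          hPM1.1, hPM2.1]
        ring
      have h1 : ((A1 ∪ A2) \ (M1 ∪ M2)).card + (M1 ∪ M2).card = (A1 ∪ A2).card :=
        Finset.card_sdiff_add_card_eq_card hsub
      have h2 : (A1 ∩ A2).card + (A1 ∪ A2).card = A1.card + A2.card :=
        Finset.card_inter_add_card_union A1 A2
      rw [hcardU] at h1
      have h1' := congrArg (Nat.cast : ℕ → ℝ) h1
      have h2' := congrArg (Nat.cast : ℕ → ℝ) h2
      push_cast at h1' h2'
      linarith
  · rintro ⟨f, hmem, hdis, hw⟩
    set M1 := (A1 ∪ A2).filter (fun a => f a = pqSet 0 a) with hM1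
    set M2 := (A1 ∪ A2).filter (fun a => f a = pqSet 1 a) with hM2
    have hM1A : M1 ⊆ A1 := by
      intro a ha
      obtain ⟨haU, hfa⟩ := Finset.mem_filter.1 ha
      rcases mem_Pdm.1 (hmem a haU) with ⟨h, _⟩ | ⟨_, he⟩ | he
      · exact h
      · exact absurd (hfa.symm.trans he) (pq0_ne_pq1 a a)
      · exact absurd (hfa.symm.trans he) (pq_ne_z 0 a a)
    have hM2A : M2 ⊆ A2 := by
      intro a ha
      obtain ⟨haU, hfa⟩ := Finset.mem_filter.1 ha
      rcases mem_Pdm.1 (hmem a haU) with ⟨_, he⟩ | ⟨h, _⟩ | he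
      · exact absurd (he.symm.trans hfa) (pq0_ne_pq1 a a)
      · exact h
      · exact absurd (hfa.symm.trans he) (pq_ne_z 1 a a)
    have hdisjM : M1 ∩ M2 = ∅ := by
      rw [Finset.eq_empty_iff_forall_notMem]
      intro a ha
      obtain ⟨h1, h2⟩ := Finset.mem_inter.1 ha
      exact pq0_ne_pq1 a a ((Finset.mem_filter.1 h1).2.symm.trans (Finset.mem_filter.1 h2).2)
    have hinj1 := coord_inj (f := f) (U := A1 ∪ A2) 0 hdis
    have hinj2 := coord_inj (f := f) (U := A1 ∪ A2) 1 hdis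
    have hcard1 : M1.card ≤ n := by
      have := Finset.card_le_card_of_injOn (f := Prod.fst) (t := (Finset.univ : Finset (Fin n)))
        (fun a _ => Finset.mem_univ _)
        (fun a ha b hb h => hinj1 a ha b hb (Or.inl h))
      simpa using this
    have hcard2 : M2.card ≤ n := by
      have := Finset.card_le_card_of_injOn (f := Prod.fst) (t := (Finset.univ : Finset (Fin n)))
        (fun a _ => Finset.mem_univ _)
        (fun a ha b hb h => hinj2 a ha b hb (Or.inl h))
      simpa using this
    rw [wdm_sum] at hw
    have hfil : ((A1 ∪ A2).filter fun a => f a = zSet a) = (A1 ∪ A2) \ (M1 ∪ M2) := by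
      ext a
      simp only [Finset.mem_filter, Finset.mem_sdiff, Finset.mem_union, hM1, hM2]
      constructor
      · rintro ⟨ha, hz⟩
        refine ⟨ha, ?_⟩
        rintro (⟨-, he⟩ | ⟨-, he⟩)
        · exact pq_ne_z 0 a a (he.symm.trans hz)
        · exact pq_ne_z 1 a a (he.symm.trans hz)
      · rintro ⟨ha, hm⟩
        push_neg at hm
        refine ⟨ha, ?_⟩
        rcases mem_Pdm.1 (hmem a (Finset.mem_union.2 ha)) with ⟨_, he⟩ | ⟨_, he⟩ | he
        · exact absurd he (hm.1 ha)
        · exact absurd he (hm.2 ha)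
        · exact he
    rw [hfil] at hw
    have hsub : M1 ∪ M2 ⊆ A1 ∪ A2 := by
      rw [hM1, hM2]
      exact Finset.union_subset (Finset.filter_subset _ _) (Finset.filter_subset _ _)
    have hcardMU : (M1 ∪ M2).card = M1.card + M2.card :=
      Finset.card_union_of_disjoint (Finset.disjoint_iff_inter_eq_empty.2 hdisjM)
    have h1 : ((A1 ∪ A2) \ (M1 ∪ M2)).card + (M1.card + M2.card) = (A1 ∪ A2).card := by
      rw [← hcardMU]; exact Finset.card_sdiff_add_card_eq_card hsub
    have h2 : (A1 ∩ A2).card + (A1 ∪ A2).card = A1.card + A2.card :=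
      Finset.card_inter_add_card_union A1 A2
    have h1' := congrArg (Nat.cast : ℕ → ℝ) h1
    have h2' := congrArg (Nat.cast : ℕ → ℝ) h2
    push_cast at h1' h2'
    have hge : (2 * n : ℝ) ≤ (M1.card : ℝ) + M2.card := by linarith
    have hgeN : 2 * n ≤ M1.card + M2.card := by exact_mod_cast hge
    have hc1 : M1.card = n := by omega
    have hc2 : M2.card = n := by omega
    exact ⟨M1, M2, hM1A, hM2A,
      isPM_of hc1 (fun a ha b hb h => hinj1 a ha b hb (Or.inl h))
        (fun a ha b hb h => hinj1 a ha b hb (Or.inr h)),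
      isPM_of hc2 (fun a ha b hb h => hinj2 a ha b hb (Or.inl h))
        (fun a ha b hb h => hinj2 a ha b hb (Or.inr h)),
      hdisjM⟩
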